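/- Let W be a graph on at most 8 vertices with a C1-drawing (a 1-planar drawing in which any two crossings share at most one endvertex). Then this drawing has at most two crossings. -/

import Mathlib

open Set

/-- A drawing of a simple graph in the plane: vertices are mapped to distinct
points, and every edge is represented by a simple arc between the images of its
endvertices whose interior avoids all vertex points. -/
structure Drawing {V : Type} (G : SimpleGraph V) where
  pos : V → ℝ × ℝ
  pos_inj : Function.Injective pos
  arc : ∀ {u v : V}, G.Adj u v → Path (pos u) (pos v)
  arc_symm : ∀ {u v : V} (h : G.Adj u v), arc h.symm = (arc h).symm
  arc_inj : ∀ {u v : V} (h : G.Adj u v), Function.Injective (arc h)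
  arc_avoid : ∀ {u v : V} (h : G.Adj u v) (w : V) (t : unitInterval),
      arc h t = pos w → t = 0 ∨ t = 1

namespace Drawing

variable {V : Type} {G : SimpleGraph V} (D : Drawing G)

/-- The interior points of the arc representing an edge. -/
def interiorPts {u v : V} (h : G.Adj u v) : Set (ℝ × ℝ) :=
  {p | ∃ t : unitInterval, t ≠ 0 ∧ t ≠ 1 ∧ D.arc h t = p}

/-- The edges whose (open) arc passes through a given point of the plane. -/
def edgesThrough (p : ℝ × ℝ) : Set (Sym2 V) :=
  {e | ∃ u v, ∃ h : G.Adj u v, e = s(u, v) ∧ p ∈ D.interiorPts h}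

/-- A crossing point: a point lying in the interiors of two distinct edges. -/
def IsCrossing (p : ℝ × ℝ) : Prop :=
  ∃ e₁ e₂ : Sym2 V, e₁ ≠ e₂ ∧ e₁ ∈ D.edgesThrough p ∧ e₂ ∈ D.edgesThrough p

/-- The set of crossing points of a drawing. -/
def crossings : Set (ℝ × ℝ) := {p | D.IsCrossing p}

/-- The endvertices of the edges crossing at a point. -/
def ends (p : ℝ × ℝ) : Set V :=
  {w | ∃ e ∈ D.edgesThrough p, w ∈ e}

/-- A (good) 1-planar drawing: each edge is crossed at most once, adjacent
edges never cross, and no point lies in the interior of three edges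
(no edge crosses itself because arcs are injective). -/
structure IsOnePlanar : Prop where
  edge_once : ∀ {u v : V} (h : G.Adj u v),
      (D.crossings ∩ D.interiorPts h).Subsingleton
  no_adj_cross : ∀ {u v x y : V} (h₁ : G.Adj u v) (h₂ : G.Adj x y),
      s(u, v) ≠ s(x, y) → (D.interiorPts h₁ ∩ D.interiorPts h₂).Nonempty →
      ({u, v} : Set V) ∩ {x, y} = ∅
  no_triple : ∀ p : ℝ × ℝ, (D.edgesThrough p).ncard ≤ 2

/-- A `𝒞ᵢ`-drawing: a 1-planar drawing in which any two distinct crossings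
share at most `i` endvertices. -/
def CDrawing (i : ℕ) : Prop :=
  D.IsOnePlanar ∧ ∀ p q : ℝ × ℝ, D.IsCrossing p → D.IsCrossing q → p ≠ q →
    (D.ends p ∩ D.ends q).ncard ≤ i

end Drawing

/-- A graph is 1-planar if it has a 1-planar drawing. -/
def SimpleGraph.OnePlanar {V : Type} (G : SimpleGraph V) : Prop :=
  ∃ D : Drawing G, D.IsOnePlanar

/-- Class `𝒞₀`: the graph has a 1-planar drawing with pairwise
endvertex-disjoint crossings. -/
def SimpleGraph.ClassC0 {V : Type} (G : SimpleGraph V) : Prop :=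
  ∃ D : Drawing G, D.CDrawing 0

/-- Class `𝒞₁`: not of class `𝒞₀`, but the graph has a 1-planar drawing in
which any two crossings share at most one endvertex. -/
def SimpleGraph.ClassC1 {V : Type} (G : SimpleGraph V) : Prop :=
  ¬ G.ClassC0 ∧ ∃ D : Drawing G, D.CDrawing 1

/-- Class `𝒞₂`: 1-planar, not of class `𝒞₀` nor `𝒞₁`, but with a 1-planar
drawing in which any two crossings share at most two endvertices. -/
def SimpleGraph.ClassC2 {V : Type} (G : SimpleGraph V) : Prop :=
  G.OnePlanar ∧ ¬ G.ClassC0 ∧ ¬ G.ClassC1 ∧ ∃ D : Drawing G, D.CDrawing 2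

/-- The join of two graphs: all edges between the two vertex sets are added. -/
def SimpleGraph.joinG {α β : Type} (G : SimpleGraph α) (H : SimpleGraph β) :
    SimpleGraph (α ⊕ β) where
  Adj x y := match x, y with
    | Sum.inl a, Sum.inl a' => G.Adj a a'
    | Sum.inr b, Sum.inr b' => H.Adj b b'
    | Sum.inl _, Sum.inr _ => True
    | Sum.inr _, Sum.inl _ => True
  symm := ⟨by
    rintro (a | b) (a' | b') h <;> simp_all <;> exact h.symm⟩
  loopless := ⟨by
    rintro (a | b) h <;> simp_all⟩


lemma Drawing.ends_lower {V : Type} [Fintype V] {G : SimpleGraph V} (D : Drawing G)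
    (hD : D.IsOnePlanar) {p : ℝ × ℝ} (hp : D.IsCrossing p) :
    4 ≤ (D.ends p).ncard := by
  obtain ⟨e₁, e₂, hne, he₁, he₂⟩ := hp
  obtain ⟨u, v, h₁, rfl, hp₁⟩ := he₁
  obtain ⟨x, y, h₂, rfl, hp₂⟩ := he₂
  have hdisj : ({u, v} : Set V) ∩ {x, y} = ∅ :=
    hD.no_adj_cross h₁ h₂ hne ⟨p, hp₁, hp₂⟩
  have hmem : ∀ w, ¬ (w ∈ ({u, v} : Set V) ∩ {x, y}) :=
    Set.eq_empty_iff_forall_notMem.mp hdisj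
  have hux : u ≠ x := fun h => hmem u ⟨by simp, by simp [h]⟩
  have huy : u ≠ y := fun h => hmem u ⟨by simp, by simp [h]⟩
  have hvx : v ≠ x := fun h => hmem v ⟨by simp, by simp [h]⟩
  have hvy : v ≠ y := fun h => hmem v ⟨by simp, by simp [h]⟩
  have huv : u ≠ v := h₁.ne
  have hxy : x ≠ y := h₂.ne
  have mu : u ∈ D.ends p := ⟨s(u, v), ⟨u, v, h₁, rfl, hp₁⟩, by simp⟩
  have mv : v ∈ D.ends p := ⟨s(u, v), ⟨u, v, h₁, rfl, hp₁⟩, by simp⟩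
  have mx : x ∈ D.ends p := ⟨s(x, y), ⟨x, y, h₂, rfl, hp₂⟩, by simp⟩
  have my : y ∈ D.ends p := ⟨s(x, y), ⟨x, y, h₂, rfl, hp₂⟩, by simp⟩
  have hsub : ({u, v, x, y} : Set V) ⊆ D.ends p := by
    rintro w (rfl | rfl | rfl | rfl) <;> assumption
  have hcard : ({u, v, x, y} : Set V).ncard = 4 := by
    rw [Set.ncard_insert_of_notMem (by simp [huv, hux, huy]),
        Set.ncard_insert_of_notMem (by simp [hvx, hvy]),
        Set.ncard_insert_of_notMem (by simp [hxy]), Set.ncard_singleton]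
  calc 4 = ({u, v, x, y} : Set V).ncard := hcard.symm
    _ ≤ (D.ends p).ncard := Set.ncard_le_ncard hsub (Set.toFinite _)

/-- A `𝒞₁`-drawing of a graph on at most 8 vertices has at most two crossings. -/
theorem C1Drawing_crossings_le_two {V : Type} [Fintype V] (G : SimpleGraph V)
    (hV : Fintype.card V ≤ 8) (D : Drawing G) (hD : D.CDrawing 1) :
    D.crossings.ncard ≤ 2 := by
  classical
  by_contra hlt
  push_neg at hlt
  have hfin : D.crossings.Finite := by
    by_contra h
    rw [Set.Infinite.ncard h] at hlt
    omega
  -- extract three distinct crossings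
  obtain ⟨p, q, r, hps, hqs, hrs, hpq, hpr, hqr⟩ :=
    (Set.two_lt_ncard_iff hfin).mp hlt
  have hp : D.IsCrossing p := hps
  have hq : D.IsCrossing q := hqs
  have hcr : D.IsCrossing r := hrs
  set A := D.ends p with hA
  set B := D.ends q with hB
  set C := D.ends r with hC
  have hA4 : 4 ≤ A.ncard := D.ends_lower hD.1 hp
  have hB4 : 4 ≤ B.ncard := D.ends_lower hD.1 hq
  have hC4 : 4 ≤ C.ncard := D.ends_lower hD.1 hcr
  have hAB : (A ∩ B).ncard ≤ 1 := hD.2 p q hp hq hpq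
  have hAC : (A ∩ C).ncard ≤ 1 := hD.2 p r hp hcr hpr
  have hBC : (B ∩ C).ncard ≤ 1 := hD.2 q r hq hcr hqr
  have e1 : (A ∪ B).ncard + (A ∩ B).ncard = A.ncard + B.ncard :=
    Set.ncard_union_add_ncard_inter A B
  have e2 : ((A ∪ B) ∪ C).ncard + ((A ∪ B) ∩ C).ncard = (A ∪ B).ncard + C.ncard :=
    Set.ncard_union_add_ncard_inter _ C
  have e3 : ((A ∪ B) ∩ C).ncard ≤ (A ∩ C).ncard + (B ∩ C).ncard := by
    rw [Set.union_inter_distrib_right]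
    exact Set.ncard_union_le _ _
  have etop : ((A ∪ B) ∪ C).ncard ≤ 8 := by
    calc ((A ∪ B) ∪ C).ncard ≤ (Set.univ : Set V).ncard :=
          Set.ncard_le_ncard (Set.subset_univ _) (Set.toFinite _)
      _ = Fintype.card V := by rw [Set.ncard_univ, Nat.card_eq_fintype_card]
      _ ≤ 8 := hV
  omega
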